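/- Let d ≥ 1, let I and J be finite index types, and let Y : I^d → R and Z : J^d → R be d-way hypermatrices over a commutative ring R. Define their direct sum Y ⊕ Z : (I ⊕ J)^d → R by (Y ⊕ Z)(k₁,…,k_d) = Y(i₁,…,i_d) if all k_ℓ = inl(i_ℓ), (Y ⊕ Z)(k₁,…,k_d) = Z(j₁,…,j_d) if all k_ℓ = inr(j_ℓ), and 0 otherwise. Then det_d(Y ⊕ Z) = det_d(Y) · det_d(Z). -/

import Mathlib

open Classical in
/-- Cayley's combinatorial hyperdeterminant of a `d`-way hypermatrix:
`det_d(X) = Σ_{σ₂,…,σ_d ∈ Perm I} sgn(σ₂)⋯sgn(σ_d) ∏_i X(i, σ₂ i, …, σ_d i)`. -/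
noncomputable def hdet {I : Type*} [Fintype I] [DecidableEq I] {R : Type*} [CommRing R]
    (d : ℕ) (X : (Fin d → I) → R) : R :=
  ∑ σ : Fin d → Equiv.Perm I,
    if ∀ h : 0 < d, σ ⟨0, h⟩ = 1 then
      (∏ ℓ, (Equiv.Perm.sign (σ ℓ) : ℤ)) • ∏ i, X fun ℓ => σ ℓ i
    else 0

lemma sumCongr_eq_one_iff {I J : Type*} (a : Equiv.Perm I) (b : Equiv.Perm J) :
    Equiv.sumCongr a b = 1 ↔ a = 1 ∧ b = 1 := by
  constructor
  · intro h
    constructor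
    · ext x
      have := congrArg (fun e : Equiv.Perm (I ⊕ J) => e (Sum.inl x)) h
      simpa using this
    · ext x
      have := congrArg (fun e : Equiv.Perm (I ⊕ J) => e (Sum.inr x)) h
      simpa using this
  · rintro ⟨rfl, rfl⟩
    ext x
    cases x <;> simp

/-- **Multiplicativity of the hyperdeterminant with respect to direct sums.** If `W` is the
direct sum of the hypermatrices `Y` and `Z` (placed block-diagonally), then
`det_d(W) = det_d(Y) · det_d(Z)`. -/
theorem hdet_direct_sum (d : ℕ) (hd : 1 ≤ d) (R : Type*) [CommRing R]
    (I J : Type*) [Fintype I] [DecidableEq I] [Fintype J] [DecidableEq J]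
    (Y : (Fin d → I) → R) (Z : (Fin d → J) → R) (W : (Fin d → I ⊕ J) → R)
    (hY : ∀ v : Fin d → I, W (fun ℓ => Sum.inl (v ℓ)) = Y v)
    (hZ : ∀ v : Fin d → J, W (fun ℓ => Sum.inr (v ℓ)) = Z v)
    (h0 : ∀ k : Fin d → I ⊕ J,
      (¬ ∃ v : Fin d → I, k = fun ℓ => Sum.inl (v ℓ)) →
      (¬ ∃ v : Fin d → J, k = fun ℓ => Sum.inr (v ℓ)) → W k = 0) :
    hdet d W = hdet d Y * hdet d Z := by
  classical
  have h0d : 0 < d := hd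
  set g : (Fin d → Equiv.Perm I × Equiv.Perm J) → (Fin d → Equiv.Perm (I ⊕ J)) :=
    fun p ℓ => Equiv.Perm.sumCongrHom I J (p ℓ) with hg
  have hginj : Function.Injective g := by
    intro p q h
    funext ℓ
    exact Equiv.Perm.sumCongrHom_injective (congrFun h ℓ)
  -- the summand of `hdet d W`
  set f : (Fin d → Equiv.Perm (I ⊕ J)) → R := fun σ =>
    if ∀ h : 0 < d, σ ⟨0, h⟩ = 1 then
      (∏ ℓ, (Equiv.Perm.sign (σ ℓ) : ℤ)) • ∏ i, W fun ℓ => σ ℓ i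
    else 0 with hf
  have step1 : hdet d W = ∑ p : Fin d → Equiv.Perm I × Equiv.Perm J, f (g p) := by
    rw [hdet]
    have himg : ∑ σ ∈ Finset.univ.image g, f σ = ∑ σ : Fin d → Equiv.Perm (I ⊕ J), f σ := by
      apply Finset.sum_subset (Finset.subset_univ _)
      intro σ _ hσ
      by_cases h1 : ∀ h : 0 < d, σ ⟨0, h⟩ = 1
      · rw [hf]
        simp only
        rw [if_pos h1]
        by_cases hall : ∀ ℓ i, ∃ i', σ ℓ (Sum.inl i) = Sum.inl i'
        · exfalso
          apply hσ
          have hmem : ∀ ℓ, σ ℓ ∈ (Equiv.Perm.sumCongrHom I J).range := by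
            intro ℓ
            apply Equiv.Perm.mem_sumCongrHom_range_of_perm_mapsTo_inl
            rintro x ⟨i, rfl⟩
            obtain ⟨i', hi'⟩ := hall ℓ i
            exact ⟨i', hi'.symm⟩
          choose p hp using fun ℓ => hmem ℓ
          exact Finset.mem_image.mpr ⟨p, Finset.mem_univ _, funext hp⟩
        · push_neg at hall
          obtain ⟨ℓ₀, i, hbad⟩ := hall
          have hz : (∏ k, W fun ℓ => σ ℓ k) = 0 := by
            apply Finset.prod_eq_zero (Finset.mem_univ (Sum.inl i))
            apply h0
            · rintro ⟨v, hv⟩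
              exact hbad (v ℓ₀) (congrFun hv ℓ₀)
            · rintro ⟨v, hv⟩
              have := congrFun hv ⟨0, h0d⟩
              rw [h1 h0d] at this
              simp at this
          rw [hz, smul_zero]
      · rw [hf]
        simp only
        rw [if_neg h1]
    rw [← himg, Finset.sum_image (fun p _ q _ h => hginj h)]
  have step2 : ∀ p : Fin d → Equiv.Perm I × Equiv.Perm J,
      f (g p) =
        (if ∀ h : 0 < d, (p ⟨0, h⟩).1 = 1 then
          (∏ ℓ, (Equiv.Perm.sign ((p ℓ).1) : ℤ)) • ∏ i, Y fun ℓ => (p ℓ).1 i else 0) *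
        (if ∀ h : 0 < d, (p ⟨0, h⟩).2 = 1 then
          (∏ ℓ, (Equiv.Perm.sign ((p ℓ).2) : ℤ)) • ∏ j, Z fun ℓ => (p ℓ).2 j else 0) := by
    intro p
    rw [hf]
    simp only [hg, Equiv.Perm.sumCongrHom_apply]
    have hcond : (∀ h : 0 < d, Equiv.sumCongr (p ⟨0, h⟩).1 (p ⟨0, h⟩).2 = 1) ↔
        ((∀ h : 0 < d, (p ⟨0, h⟩).1 = 1) ∧ (∀ h : 0 < d, (p ⟨0, h⟩).2 = 1)) := by
      constructor
      · intro h
        exact ⟨fun hh => ((sumCongr_eq_one_iff _ _).1 (h hh)).1,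
               fun hh => ((sumCongr_eq_one_iff _ _).1 (h hh)).2⟩
      · rintro ⟨h1, h2⟩ hh
        rw [h1 hh, h2 hh]
        exact (sumCongr_eq_one_iff _ _).2 ⟨rfl, rfl⟩
    rw [if_congr hcond rfl rfl]
    by_cases hc1 : ∀ h : 0 < d, (p ⟨0, h⟩).1 = 1
    · by_cases hc2 : ∀ h : 0 < d, (p ⟨0, h⟩).2 = 1
      · rw [if_pos ⟨hc1, hc2⟩, if_pos hc1, if_pos hc2]
        have hsign : (∏ ℓ, (Equiv.Perm.sign (Equiv.sumCongr (p ℓ).1 (p ℓ).2) : ℤ)) =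
            (∏ ℓ, (Equiv.Perm.sign ((p ℓ).1) : ℤ)) * ∏ ℓ, (Equiv.Perm.sign ((p ℓ).2) : ℤ) := by
          rw [← Finset.prod_mul_distrib]
          apply Finset.prod_congr rfl
          intro ℓ _
          rw [Equiv.Perm.sign_sumCongr]
          push_cast
          ring
        have hprod : (∏ k, W fun ℓ => Equiv.sumCongr (p ℓ).1 (p ℓ).2 k) =
            (∏ i, Y fun ℓ => (p ℓ).1 i) * ∏ j, Z fun ℓ => (p ℓ).2 j := by
          rw [Fintype.prod_sum_type]
          congr 1
          · apply Finset.prod_congr rfl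
            intro i _
            simp only [Equiv.sumCongr_apply, Sum.map_inl]
            exact hY _
          · apply Finset.prod_congr rfl
            intro j _
            simp only [Equiv.sumCongr_apply, Sum.map_inr]
            exact hZ _
        rw [hsign, hprod, smul_mul_smul_comm]
      · rw [if_neg (fun h => hc2 h.2), if_neg hc2, mul_zero]
    · rw [if_neg (fun h => hc1 h.1), if_neg hc1, zero_mul]
  rw [step1, Finset.sum_congr rfl (fun p _ => step2 p)]
  refine (Fintype.sum_equiv (Equiv.arrowProdEquivProdArrow (Fin d) (fun _ => Equiv.Perm I) (fun _ => Equiv.Perm J))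
    _ (fun q : (Fin d → Equiv.Perm I) × (Fin d → Equiv.Perm J) =>
        (if ∀ h : 0 < d, q.1 ⟨0, h⟩ = 1 then
          (∏ ℓ, (Equiv.Perm.sign (q.1 ℓ) : ℤ)) • ∏ i, Y fun ℓ => q.1 ℓ i else 0) *
        (if ∀ h : 0 < d, q.2 ⟨0, h⟩ = 1 then
          (∏ ℓ, (Equiv.Perm.sign (q.2 ℓ) : ℤ)) • ∏ j, Z fun ℓ => q.2 ℓ j else 0))
    (fun p => rfl)).trans ?_
  rw [Fintype.sum_prod_type, hdet, hdet, Finset.sum_mul_sum]
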